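/- For every band matrix M of type (r,q) with entries (a_{ik}), the determinants Δ_k built from the moments of M satisfy Δ_0 = Δ_1 = ⋯ = Δ_{q−1} = 1, and for every i ≥ 0, setting h = ⌊(i+q)/q⌋, Δ_{i+q} = ∏_{s=1}^{h} ( ∏_{j=0}^{q−1} a_{i+q−(s−1)q−j, i−(s−1)q−j} )^s, where by convention any factor a_{m,k} with k < 0 is replaced by 1. (Explicitly: Δ_{i+q} = (a_{i+q,i}⋯a_{i+1,i−q+1}) (a_{i,i−q}⋯a_{i−q+1,i−2q+1})^2 ⋯ (a_{i−(h−2)q,i−(h−1)q}⋯a_{q,0})^h.) -/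

import Mathlib

open scoped BigOperators

noncomputable section

/-- The `j`-th standard basis sequence `e_j`. -/
def stdBasis (j : ℕ) : ℕ → ℂ := fun i => if i = j then 1 else 0

/-- Action of a band matrix with band width `r` above the diagonal on a sequence:
`(M v)_i = Σ_k a_{ik} v_k` (a finite sum, since `a i k = 0` for `k > i + r`). -/
def bandApply (r : ℕ) (a : ℕ → ℕ → ℂ) (v : ℕ → ℂ) : ℕ → ℂ :=
  fun i => ∑ k ∈ Finset.range (i + r + 1), a i k * v k

/-- `a` is a band matrix of type `(r, q)`. -/
structure IsBandMatrix (r q : ℕ) (a : ℕ → ℕ → ℂ) : Prop where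
  upper : ∀ i k, i + r < k → a i k = 0
  lower : ∀ i k, k + q < i → a i k = 0
  diag_one : ∀ i, a i (i + r) = 1
  diag_ne : ∀ i, a (i + q) i ≠ 0

/-- The moments `S_k^{m,n} = (M^k e_{n-1})_{m-1}` of a band matrix. -/
def moment (r : ℕ) (a : ℕ → ℕ → ℂ) (k m n : ℕ) : ℂ :=
  (bandApply r a)^[k] (stdBasis (n - 1)) (m - 1)

/-- The determinants `Δ_k` built from a family of moments `S`:
`Δ_k = det (α_{ij})_{i,j=0}^k` with `α_{ij} = S_{⌊i/r⌋+⌊j/q⌋}^{(i mod r)+1, (j mod q)+1}`. -/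
def deltaFromMoments (r q : ℕ) (S : ℕ → ℕ → ℕ → ℂ) (k : ℕ) : ℂ :=
  Matrix.det (Matrix.of fun i j : Fin (k + 1) =>
    S ((i : ℕ) / r + (j : ℕ) / q) ((i : ℕ) % r + 1) ((j : ℕ) % q + 1))

/-- The entries of a band matrix extended by the convention that any entry `a_{m,k}`
with a negative column index `k < 0` is replaced by `1`. -/
def entryExt (a : ℕ → ℕ → ℂ) (m k : ℤ) : ℂ :=
  if k < 0 then 1 else a m.toNat k.toNat


namespace BandAux

section Elayer
variable (r q : ℕ) (a : ℕ → ℕ → ℂ)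


def E (p m n : ℕ) : ℂ := (bandApply r a)^[p] (stdBasis n) m

lemma E_zero (m n : ℕ) : E r a 0 m n = if m = n then 1 else 0 := rfl

lemma E_succ (p m n : ℕ) :
    E r a (p+1) m n = ∑ c ∈ Finset.range (m + r + 1), a m c * E r a p c n := by
  have h : (bandApply r a)^[p+1] = bandApply r a ∘ (bandApply r a)^[p] :=
    Function.iterate_succ' _ _
  simp only [E, h, Function.comp_apply, bandApply]

variable {r q a} (ha : IsBandMatrix r q a)
include ha

omit ha in
lemma E_mul' : True := trivial

include ha in
lemma E_upper : ∀ p m n, m + p * r < n → E r a p m n = 0 := by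
  intro p
  induction p with
  | zero => intro m n h; simp only [E_zero]; rw [if_neg (by omega)]
  | succ p ih =>
    intro m n h
    have hsm : (p+1) * r = p * r + r := Nat.succ_mul p r
    rw [E_succ]
    refine Finset.sum_eq_zero fun c hc => ?_
    rw [Finset.mem_range] at hc
    rw [ih c n (by omega), mul_zero]

lemma E_diag_one : ∀ p m, E r a p m (m + p * r) = 1 := by
  intro p
  induction p with
  | zero => intro m; simp [E_zero]
  | succ p ih =>
    intro m
    have hsm : (p+1) * r = p * r + r := Nat.succ_mul p r
    rw [E_succ]
    rw [Finset.sum_eq_single (m + r)]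
    · rw [ha.diag_one, one_mul]
      have : m + (p + 1) * r = (m + r) + p * r := by ring
      rw [this, ih]
    · intro c hc hne
      rw [Finset.mem_range] at hc
      rw [E_upper ha p c (m + (p+1)*r) (by omega), mul_zero]
    · intro h
      exact absurd (Finset.mem_range.2 (by omega)) h

lemma E_lower : ∀ p m n, n + p * q < m → E r a p m n = 0 := by
  intro p
  induction p with
  | zero => intro m n h; simp only [E_zero]; rw [if_neg (by omega)]
  | succ p ih =>
    intro m n h
    have hsm : (p+1) * q = p * q + q := Nat.succ_mul p q
    rw [E_succ]
    refine Finset.sum_eq_zero fun c hc => ?_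
    rw [Finset.mem_range] at hc
    by_cases hcn : n + p * q < c
    · rw [ih c n hcn, mul_zero]
    · rw [ha.lower m c (by omega), zero_mul]

lemma E_diag_prod : ∀ p n, E r a p (n + p * q) n
    = ∏ t ∈ Finset.range p, a (n + (t+1) * q) (n + t * q) := by
  intro p
  induction p with
  | zero => intro n; simp [E_zero]
  | succ p ih =>
    intro n
    have hsm : (p+1) * q = p * q + q := Nat.succ_mul p q
    rw [E_succ, Finset.sum_eq_single (n + p * q)]
    · rw [ih, Finset.prod_range_succ]; ring
    · intro c hc hne
      rw [Finset.mem_range] at hc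
      by_cases hcn : n + p * q < c
      · rw [E_lower ha p c n hcn, mul_zero]
      · rw [ha.lower _ c (by omega), zero_mul]
    · intro h
      exact absurd (Finset.mem_range.2 (by omega)) h

lemma E_mul : ∀ p p' m n, E r a (p + p') m n
    = ∑ c ∈ Finset.range (m + p * r + 1), E r a p m c * E r a p' c n := by
  intro p
  induction p with
  | zero =>
    intro p' m n
    rw [zero_add]
    rw [Finset.sum_eq_single m]
    · simp [E_zero]
    · intro c hc hne; simp [E_zero, Ne.symm hne]
    · intro h; exact absurd (Finset.mem_range.2 (by omega)) h
  | succ p ih =>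
    intro p' m n
    have h1 : p + 1 + p' = (p + p') + 1 := by omega
    rw [h1, E_succ]
    have h2 : ∀ c ∈ Finset.range (m + r + 1),
        a m c * E r a (p + p') c n
        = ∑ d ∈ Finset.range (m + r + p * r + 1), a m c * (E r a p c d * E r a p' d n) := by
      intro c hc
      rw [Finset.mem_range] at hc
      rw [ih p' c n, Finset.mul_sum]
      refine Finset.sum_subset ?_ ?_
      · intro x hx; rw [Finset.mem_range] at *; omega
      · intro x hx hnx
        rw [Finset.mem_range] at hx hnx
        rw [E_upper ha p c x (by omega), zero_mul, mul_zero]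
    rw [Finset.sum_congr rfl h2, Finset.sum_comm]
    have h3 : m + (p+1) * r + 1 = m + r + p * r + 1 := by ring
    rw [h3]
    refine Finset.sum_congr rfl fun d hd => ?_
    rw [E_succ, Finset.sum_mul]
    refine Finset.sum_congr rfl fun c hc => ?_
    ring


end Elayer

section Comb

variable (q : ℕ) (a : ℕ → ℕ → ℂ)

def dd (j : ℕ) : ℂ :=
  ∏ t ∈ Finset.range (j / q), a (j % q + (t+1) * q) (j % q + t * q)

def CC (i : ℕ) : ℂ := ∏ c ∈ Finset.range (i+1), a (c + q) c

def Fq (m : ℤ) : ℂ := ∏ j ∈ Finset.range q, entryExt a (m + q - j) (m - j)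

def DD (N : ℕ) : ℂ := ∏ j ∈ Finset.range (N+1), dd q a j

variable {q a}

lemma entryExt_eq (x y : ℤ) (m k : ℕ) (hx : x = m) (hy : y = k) :
    entryExt a x y = a m k := by
  subst hx; subst hy
  simp [entryExt]

lemma dd_lt {j : ℕ} (h : j < q) : dd q a j = 1 := by
  simp [dd, Nat.div_eq_of_lt h]

lemma dd_step (hq : 1 ≤ q) (j : ℕ) : dd q a (j + q) = dd q a j * a (j + q) j := by
  have h1 : (j + q) / q = j / q + 1 := Nat.add_div_right j (by omega)
  have h2 : (j + q) % q = j % q := Nat.add_mod_right j q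
  have hjq : j % q + j / q * q = j := Nat.mod_add_div' j q
  have hsm : (j / q + 1) * q = j / q * q + q := Nat.succ_mul _ _
  have hX : j % q + (j / q + 1) * q = j + q := by omega
  rw [dd, h1, h2, Finset.prod_range_succ, hX, hjq, dd]

lemma dd_ne (ha : IsBandMatrix r q a) (j : ℕ) : dd q a j ≠ 0 := by
  rw [dd]
  refine Finset.prod_ne_zero_iff.2 fun t _ => ?_
  have h : j % q + (t+1) * q = (j % q + t * q) + q := by
    have h2 : (t+1) * q = t * q + q := by ring
    omega
  rw [h]
  exact ha.diag_ne _

lemma T_eq_C (ha : IsBandMatrix r q a) (hq : 1 ≤ q) :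
    ∀ m, ∏ j ∈ Finset.Ico (m+1) (m+q+1), dd q a j = CC q a m := by
  intro m
  induction m with
  | zero =>
    rw [show 0+q+1 = q+1 by omega, Finset.prod_Ico_succ_top (by omega)]
    have h1 : ∏ j ∈ Finset.Ico (0+1) q, dd q a j = 1 :=
      Finset.prod_eq_one fun j hj => dd_lt (Finset.mem_Ico.1 hj).2
    have h2 : dd q a q = a q 0 := by
      have := dd_step (a := a) hq 0
      rw [zero_add] at this
      rw [this, dd_lt (by omega), one_mul]
    rw [h1, h2, one_mul, CC]
    simp
  | succ m ih =>
    have key : dd q a (m+1) * ∏ j ∈ Finset.Ico (m+1+1) (m+1+q+1), dd q a j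
        = dd q a (m+1) * (CC q a m * a (m+1+q) (m+1)) := by
      rw [← Finset.prod_eq_prod_Ico_succ_bot (by omega) (dd q a)]
      have h3 : m+1+q+1 = (m+q+1)+1 := by omega
      rw [h3, Finset.prod_Ico_succ_top (by omega), ih]
      rw [show m+q+1 = (m+1)+q by omega, dd_step hq (m+1)]
      ring
    have h4 := mul_left_cancel₀ (dd_ne ha (m+1)) key
    rw [h4]
    show CC q a m * a (m+1+q) (m+1) = CC q a (m+1)
    exact (Finset.prod_range_succ (fun c => a (c+q) c) (m+1)).symm

lemma D_rec (ha : IsBandMatrix r q a) (hq : 1 ≤ q) (m : ℕ) :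
    DD q a (m + q) = DD q a m * CC q a m := by
  rw [DD, DD, Finset.range_eq_Ico,
    ← Finset.prod_Ico_consecutive (dd q a) (show 0 ≤ m+1 by omega) (show m+1 ≤ m+q+1 by omega),
    T_eq_C ha hq m, Finset.range_eq_Ico]


lemma D_lt (ha : IsBandMatrix r q a) (hq : 1 ≤ q) {i : ℕ} (hi : i < q) :
    DD q a (i+q) = CC q a i := by
  rw [D_rec ha hq i]
  have h : DD q a i = 1 := Finset.prod_eq_one fun j hj => by
    rw [Finset.mem_range] at hj
    exact dd_lt (by omega)
  rw [h, one_mul]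

lemma Fq_lt (hq : 1 ≤ q) {i : ℕ} (hi : i < q) : Fq q a i = CC q a i := by
  rw [Fq, Finset.range_eq_Ico,
    ← Finset.prod_Ico_consecutive _ (show 0 ≤ i+1 by omega) (show i+1 ≤ q by omega)]
  have h2 : ∏ j ∈ Finset.Ico (i+1) q, entryExt a ((i:ℤ)+q-j) ((i:ℤ)-j) = 1 := by
    refine Finset.prod_eq_one fun j hj => ?_
    rw [Finset.mem_Ico] at hj
    rw [entryExt, if_pos (by omega)]
  rw [h2, mul_one, ← Finset.range_eq_Ico]
  have h1 : ∏ j ∈ Finset.range (i+1), entryExt a ((i:ℤ)+q-j) ((i:ℤ)-j)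
      = ∏ j ∈ Finset.range (i+1), a ((i-j)+q) (i-j) := by
    refine Finset.prod_congr rfl fun j hj => ?_
    rw [Finset.mem_range] at hj
    exact entryExt_eq _ _ _ _ (by omega) (by omega)
  rw [h1, CC, ← Finset.prod_range_reflect (fun c => a (c+q) c) (i+1)]
  refine Finset.prod_congr rfl fun j hj => ?_
  rw [Finset.mem_range] at hj
  rw [show i+1-1-j = i-j by omega]

lemma C_step (hq : 1 ≤ q) (i : ℕ) :
    CC q a (i+q) = CC q a i * Fq q a ((i:ℤ)+q) := by
  have hF : Fq q a ((i:ℤ)+q) = ∏ t ∈ Finset.range q, a (i+1+t+q) (i+1+t) := by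
    rw [Fq, ← Finset.prod_range_reflect (fun t => a (i+1+t+q) (i+1+t)) q]
    refine Finset.prod_congr rfl fun j hj => ?_
    rw [Finset.mem_range] at hj
    exact entryExt_eq _ _ _ _ (by omega) (by omega)
  rw [CC, CC, Finset.range_eq_Ico,
    ← Finset.prod_Ico_consecutive _ (show 0 ≤ i+1 by omega) (show i+1 ≤ i+q+1 by omega)]
  congr 1
  rw [Finset.range_eq_Ico]
  rw [hF, Finset.prod_Ico_eq_prod_range, show i+q+1-(i+1) = q by omega]

variable (q a)

def G (i : ℕ) : ℂ := ∏ t ∈ Finset.range ((i+q)/q), Fq q a ((i:ℤ) - t*q)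

def R (i : ℕ) : ℂ := ∏ t ∈ Finset.range ((i+q)/q), (Fq q a ((i:ℤ) - t*q))^(t+1)

variable {q a}

lemma G_eq_C (hq : 1 ≤ q) : ∀ i, G q a i = CC q a i := by
  intro i
  induction i using Nat.strong_induction_on with
  | _ i ih =>
    by_cases hi : i < q
    · have h1 : (i+q)/q = 1 := by
        rw [Nat.add_div_right _ (show 0 < q by omega), Nat.div_eq_of_lt hi]
      rw [G, h1, Finset.prod_range_one,
        show (i:ℤ) - ((0:ℕ):ℤ)*q = (i:ℤ) by push_cast; ring]
      exact Fq_lt hq hi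
    · push_neg at hi
      set i' := i - q with hi'
      have hii : i = i' + q := by omega
      have h1 : (i+q)/q = (i'+q)/q + 1 := by
        rw [hii, show i'+q+q = (i'+q)+q by ring, Nat.add_div_right _ (show 0 < q by omega)]
      rw [G, h1, Finset.prod_range_succ']
      have h2 : (∏ t ∈ Finset.range ((i'+q)/q), Fq q a ((i:ℤ) - ((t+1:ℕ):ℤ)*q))
          = G q a i' := by
        rw [G]
        refine Finset.prod_congr rfl fun t _ => ?_
        congr 1
        push_cast [hii]
        ring
      rw [h2, ih i' (by omega),
        show ((i:ℤ) - ((0:ℕ):ℤ)*q) = (i':ℤ) + q by push_cast [hii]; ring, hii]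
      exact (C_step hq i').symm

lemma R_eq_D (ha : IsBandMatrix r q a) (hq : 1 ≤ q) : ∀ i, R q a i = DD q a (i+q) := by
  intro i
  induction i using Nat.strong_induction_on with
  | _ i ih =>
    by_cases hi : i < q
    · have h1 : (i+q)/q = 1 := by
        rw [Nat.add_div_right _ (show 0 < q by omega), Nat.div_eq_of_lt hi]
      rw [R, h1, Finset.prod_range_one,
        show (i:ℤ) - ((0:ℕ):ℤ)*q = (i:ℤ) by push_cast; ring, pow_one]
      rw [Fq_lt hq hi]
      exact (D_lt ha hq hi).symm
    · push_neg at hi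
      set i' := i - q with hi'
      have hii : i = i' + q := by omega
      have h1 : (i+q)/q = (i'+q)/q + 1 := by
        rw [hii, show i'+q+q = (i'+q)+q by ring, Nat.add_div_right _ (show 0 < q by omega)]
      rw [R, h1, Finset.prod_range_succ']
      have h2 : (∏ t ∈ Finset.range ((i'+q)/q), (Fq q a ((i:ℤ) - ((t+1:ℕ):ℤ)*q))^(t+1+1))
          = R q a i' * G q a i' := by
        rw [R, G, ← Finset.prod_mul_distrib]
        refine Finset.prod_congr rfl fun t _ => ?_
        rw [show (i:ℤ) - ((t+1:ℕ):ℤ)*q = (i':ℤ) - (t:ℕ)*q by push_cast [hii]; ring]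
        exact pow_succ _ (t+1)
      rw [h2, ih i' (by omega), G_eq_C hq,
        show ((i:ℤ) - ((0:ℕ):ℤ)*q) = (i':ℤ) + q by push_cast [hii]; ring, pow_one]
      rw [show i+q = (i'+q)+q by omega, D_rec ha hq (i'+q), C_step hq i']
      ring


end Comb

section Det
variable {r q : ℕ} {a : ℕ → ℕ → ℂ}


lemma delta_eq (ha : IsBandMatrix r q a) (k : ℕ) :
    deltaFromMoments r q (moment r a) k = ∏ j ∈ Finset.range (k+1), dd q a j := by
  have hAB : (Matrix.of fun i j : Fin (k + 1) =>
      moment r a ((i : ℕ) / r + (j : ℕ) / q) ((i : ℕ) % r + 1) ((j : ℕ) % q + 1))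
      = (Matrix.of fun i c : Fin (k+1) => E r a ((i:ℕ)/r) ((i:ℕ)%r) (c:ℕ)) *
        (Matrix.of fun c j : Fin (k+1) => E r a ((j:ℕ)/q) ((c:ℕ)) ((j:ℕ)%q)) := by
    ext i j
    have hm : moment r a ((i:ℕ)/r + (j:ℕ)/q) ((i:ℕ)%r+1) ((j:ℕ)%q+1)
        = E r a ((i:ℕ)/r + (j:ℕ)/q) ((i:ℕ)%r) ((j:ℕ)%q) := by
      simp [moment, E]
    simp only [Matrix.mul_apply, Matrix.of_apply]
    rw [hm, E_mul ha]
    have hir : (i:ℕ)%r + ((i:ℕ)/r) * r = (i:ℕ) := Nat.mod_add_div' _ _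
    rw [Fin.sum_univ_eq_sum_range
      (fun c => E r a ((i:ℕ)/r) ((i:ℕ)%r) c * E r a ((j:ℕ)/q) c ((j:ℕ)%q))]
    refine Finset.sum_subset ?_ ?_
    · intro x hx; rw [Finset.mem_range] at *; have := i.isLt; omega
    · intro x hx hnx
      rw [Finset.mem_range] at hx hnx
      rw [E_upper ha _ _ _ (by omega), zero_mul]
  rw [deltaFromMoments, hAB, Matrix.det_mul]
  have hdetA : (Matrix.of fun i c : Fin (k+1) => E r a ((i:ℕ)/r) ((i:ℕ)%r) (c:ℕ)).det = 1 := by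
    rw [Matrix.det_of_lowerTriangular]
    · refine Finset.prod_eq_one fun i _ => ?_
      have hir : (i:ℕ)%r + ((i:ℕ)/r) * r = (i:ℕ) := Nat.mod_add_div' _ _
      have h := E_diag_one ha ((i:ℕ)/r) ((i:ℕ)%r)
      rw [hir] at h
      exact h
    · intro i c hic
      have h2 : (i : ℕ) < (c : ℕ) := hic
      have hir : (i:ℕ)%r + ((i:ℕ)/r) * r = (i:ℕ) := Nat.mod_add_div' _ _
      exact E_upper ha _ _ _ (by omega)
  have hdetB : (Matrix.of fun c j : Fin (k+1) => E r a ((j:ℕ)/q) ((c:ℕ)) ((j:ℕ)%q)).det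
      = ∏ j ∈ Finset.range (k+1), dd q a j := by
    rw [Matrix.det_of_upperTriangular]
    · rw [← Fin.prod_univ_eq_prod_range (fun j => dd q a j)]
      refine Finset.prod_congr rfl fun j _ => ?_
      have hjq : (j:ℕ)%q + ((j:ℕ)/q) * q = (j:ℕ) := Nat.mod_add_div' _ _
      have h := E_diag_prod ha ((j:ℕ)/q) ((j:ℕ)%q)
      rw [hjq] at h
      rw [Matrix.of_apply, h]
      rfl
    · intro c j hcj
      have h2 : (j : ℕ) < (c : ℕ) := hcj
      have hjq : (j:ℕ)%q + ((j:ℕ)/q) * q = (j:ℕ) := Nat.mod_add_div' _ _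
      exact E_lower ha _ _ _ (by omega)
  rw [hdetA, hdetB, one_mul]

end Det

end BandAux

/-- `Δ_0 = ⋯ = Δ_{q−1} = 1`, and
`Δ_{i+q} = ∏_{s=1}^{h} ( ∏_{j=0}^{q−1} a_{i+q−(s−1)q−j, i−(s−1)q−j} )^s` where
`h = ⌊(i+q)/q⌋`, with the convention that factors with negative column index equal `1`. -/
theorem delta_product_formula (r q : ℕ) (hr : 1 ≤ r) (hq : 1 ≤ q)
    (a : ℕ → ℕ → ℂ) (ha : IsBandMatrix r q a) :
    (∀ k, k < q → deltaFromMoments r q (moment r a) k = 1) ∧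
    (∀ i : ℕ, deltaFromMoments r q (moment r a) (i + q) =
      ∏ s ∈ Finset.Icc 1 ((i + q) / q),
        (∏ j ∈ Finset.range q,
          entryExt a ((i : ℤ) + q - ((s : ℤ) - 1) * q - j)
            ((i : ℤ) - ((s : ℤ) - 1) * q - j)) ^ s) := by
  constructor
  · intro k hk
    rw [BandAux.delta_eq ha k]
    exact Finset.prod_eq_one fun j hj => BandAux.dd_lt (by rw [Finset.mem_range] at hj; omega)
  · intro i
    rw [BandAux.delta_eq ha (i+q)]
    have hD : (∏ j ∈ Finset.range (i+q+1), BandAux.dd q a j) = BandAux.DD q a (i+q) := rfl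
    rw [hD, ← BandAux.R_eq_D ha hq i, BandAux.R, ← Finset.Ico_add_one_right_eq_Icc,
      Finset.prod_Ico_eq_prod_range]
    refine Finset.prod_congr (by simp) fun t ht => ?_
    rw [add_comm 1 t]
    congr 1
    rw [BandAux.Fq]
    refine Finset.prod_congr rfl fun j _ => ?_
    congr 1 <;> push_cast <;> ring
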